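/- If S1 is not a clique in G1 (a connected 3-leaf power) and H = (G1,S1) ⊗ (G2,S2) is a 3-leaf power with G2 connected, then G2 is a clique, S2 = V(G2), and there is a vertex u in G1 with S1 = N(u) ∪ {u}. -/

import Mathlib

open SimpleGraph

/-- The bull: a triangle `0,1,2` with pendant vertices `3` (on `1`) and `4` (on `2`). -/
def bull : SimpleGraph (Fin 5) :=
  SimpleGraph.fromRel (fun a b => (a, b) ∈ ([(0,1),(0,2),(1,2),(1,3),(2,4)] : List (Fin 5 × Fin 5)))

/-- The dart: a diamond `0,1,2,3` (missing edge `(0,1)`) plus a pendant vertex `4`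
adjacent to the degree-3 vertex `2`. -/
def dart : SimpleGraph (Fin 5) :=
  SimpleGraph.fromRel (fun a b => (a, b) ∈ ([(0,2),(0,3),(1,2),(1,3),(2,3),(2,4)] : List (Fin 5 × Fin 5)))

/-- The gem: a path `0-1-2-3` plus a dominating vertex `4`. -/
def gem : SimpleGraph (Fin 5) :=
  SimpleGraph.fromRel (fun a b => (a, b) ∈ ([(0,1),(1,2),(2,3),(0,4),(1,4),(2,4),(3,4)] : List (Fin 5 × Fin 5)))

/-- A graph is a 3-leaf power iff it is {bull, dart, gem, chordless `C≥4`}-free. -/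
def Is3LeafPower {V : Type*} (H : SimpleGraph V) : Prop :=
  IsEmpty (bull ↪g H) ∧ IsEmpty (dart ↪g H) ∧ IsEmpty (gem ↪g H) ∧
    ∀ n, 4 ≤ n → IsEmpty (SimpleGraph.cycleGraph n ↪g H)

/-- The join composition `(G1,S1) ⊗ (G2,S2)`: the disjoint union of `G1` and `G2`
together with all edges between `S1` and `S2`. -/
def joinComp {V1 V2 : Type*} (G1 : SimpleGraph V1) (G2 : SimpleGraph V2)
    (S1 : Set V1) (S2 : Set V2) : SimpleGraph (V1 ⊕ V2) :=
  SimpleGraph.fromRel (fun a b =>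
    (∃ x y, a = .inl x ∧ b = .inl y ∧ G1.Adj x y) ∨
    (∃ x y, a = .inr x ∧ b = .inr y ∧ G2.Adj x y) ∨
    (∃ x y, a = .inl x ∧ b = .inr y ∧ x ∈ S1 ∧ y ∈ S2))

section Aux

set_option linter.unnecessarySeqFocus false
set_option linter.unreachableTactic false
set_option linter.unusedTactic false

variable {V1 V2 : Type*} {G1 : SimpleGraph V1} {G2 : SimpleGraph V2} {S1 : Set V1} {S2 : Set V2}

lemma jc_ll {x y : V1} : (joinComp G1 G2 S1 S2).Adj (Sum.inl x) (Sum.inl y) ↔ G1.Adj x y := by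
  simp only [joinComp, fromRel_adj]
  constructor
  · rintro ⟨hne, (⟨x',y',hx,hy,h⟩|⟨x',y',hx,hy,h⟩|⟨x',y',hx,hy,h⟩)|(⟨x',y',hx,hy,h⟩|⟨x',y',hx,hy,h⟩|⟨x',y',hx,hy,h,h2⟩)⟩ <;>
      simp_all <;> exact h.symm
  · intro h; exact ⟨by simp [h.ne], Or.inl (Or.inl ⟨x, y, rfl, rfl, h⟩)⟩

lemma jc_rr {x y : V2} : (joinComp G1 G2 S1 S2).Adj (Sum.inr x) (Sum.inr y) ↔ G2.Adj x y := by
  simp only [joinComp, fromRel_adj]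
  constructor
  · rintro ⟨hne, (⟨x',y',hx,hy,h⟩|⟨x',y',hx,hy,h⟩|⟨x',y',hx,hy,h⟩)|(⟨x',y',hx,hy,h⟩|⟨x',y',hx,hy,h⟩|⟨x',y',hx,hy,h,h2⟩)⟩ <;>
      simp_all <;> exact h.symm
  · intro h; exact ⟨by simp [h.ne], Or.inl (Or.inr (Or.inl ⟨x, y, rfl, rfl, h⟩))⟩

lemma jc_lr {x : V1} {y : V2} :
    (joinComp G1 G2 S1 S2).Adj (Sum.inl x) (Sum.inr y) ↔ x ∈ S1 ∧ y ∈ S2 := by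
  simp only [joinComp, fromRel_adj]
  constructor
  · rintro ⟨hne, (⟨x',y',hx,hy,h⟩|⟨x',y',hx,hy,h⟩|⟨x',y',hx,hy,h,h2⟩)|(⟨x',y',hx,hy,h⟩|⟨x',y',hx,hy,h⟩|⟨x',y',hx,hy,h,h2⟩)⟩ <;>
      simp_all
  · rintro ⟨h1, h2⟩; exact ⟨by simp, Or.inl (Or.inr (Or.inr ⟨x, y, rfl, rfl, h1, h2⟩))⟩

lemma jc_rl {x : V1} {y : V2} :
    (joinComp G1 G2 S1 S2).Adj (Sum.inr y) (Sum.inl x) ↔ x ∈ S1 ∧ y ∈ S2 := by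
  rw [adj_comm]; exact jc_lr

variable {V : Type*} {H : SimpleGraph V}

lemma dart_config (hfree : IsEmpty (dart ↪g H)) {p0 p1 p2 p3 p4 : V}
    (a02 : H.Adj p0 p2) (a03 : H.Adj p0 p3) (a12 : H.Adj p1 p2) (a13 : H.Adj p1 p3)
    (a23 : H.Adj p2 p3) (a24 : H.Adj p2 p4)
    (n01 : ¬H.Adj p0 p1) (n04 : ¬H.Adj p0 p4) (n14 : ¬H.Adj p1 p4) (n34 : ¬H.Adj p3 p4)
    (d01 : p0 ≠ p1) (d04 : p0 ≠ p4) (d14 : p1 ≠ p4) (d34 : p3 ≠ p4) : False := by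
  have d02 := a02.ne; have d03 := a03.ne; have d12 := a12.ne; have d13 := a13.ne
  have d23 := a23.ne; have d24 := a24.ne
  refine hfree.false ⟨⟨![p0,p1,p2,p3,p4], ?_⟩, ?_⟩
  · intro i j hij
    fin_cases i <;> fin_cases j <;> simp_all
  · intro i j
    fin_cases i <;> fin_cases j <;>
      simp [dart, fromRel_adj] <;>
      first
        | assumption
        | (exact fun h => n01 h.symm)
        | (exact fun h => n04 h.symm)
        | (exact fun h => n14 h.symm)
        | (exact fun h => n34 h.symm)
        | (exact a02.symm) | (exact a03.symm) | (exact a12.symm) | (exact a13.symm)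
        | (exact a23.symm) | (exact a24.symm)

lemma gem_config (hfree : IsEmpty (gem ↪g H)) {p0 p1 p2 p3 p4 : V}
    (a01 : H.Adj p0 p1) (a12 : H.Adj p1 p2) (a23 : H.Adj p2 p3)
    (a04 : H.Adj p0 p4) (a14 : H.Adj p1 p4) (a24 : H.Adj p2 p4) (a34 : H.Adj p3 p4)
    (n02 : ¬H.Adj p0 p2) (n03 : ¬H.Adj p0 p3) (n13 : ¬H.Adj p1 p3)
    (d02 : p0 ≠ p2) (d03 : p0 ≠ p3) (d13 : p1 ≠ p3) : False := by
  have d01 := a01.ne; have d12 := a12.ne; have d23 := a23.ne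
  have d04 := a04.ne; have d14 := a14.ne; have d24 := a24.ne; have d34 := a34.ne
  refine hfree.false ⟨⟨![p0,p1,p2,p3,p4], ?_⟩, ?_⟩
  · intro i j hij
    fin_cases i <;> fin_cases j <;> simp_all
  · intro i j
    fin_cases i <;> fin_cases j <;>
      simp [gem, fromRel_adj] <;>
      first
        | assumption
        | (exact fun h => n02 h.symm)
        | (exact fun h => n03 h.symm)
        | (exact fun h => n13 h.symm)
        | (exact a01.symm) | (exact a12.symm) | (exact a23.symm) | (exact a04.symm)
        | (exact a14.symm) | (exact a24.symm) | (exact a34.symm)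

lemma c4_config (hfree : ∀ n, 4 ≤ n → IsEmpty (cycleGraph n ↪g H)) {p0 p1 p2 p3 : V}
    (a01 : H.Adj p0 p1) (a12 : H.Adj p1 p2) (a23 : H.Adj p2 p3) (a30 : H.Adj p3 p0)
    (n02 : ¬H.Adj p0 p2) (n13 : ¬H.Adj p1 p3)
    (d02 : p0 ≠ p2) (d13 : p1 ≠ p3) : False := by
  have d01 := a01.ne; have d12 := a12.ne; have d23 := a23.ne; have d30 := a30.ne
  refine (hfree 4 le_rfl).false ⟨⟨![p0,p1,p2,p3], ?_⟩, ?_⟩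
  · intro i j hij
    fin_cases i <;> fin_cases j <;> simp_all
  · intro i j
    fin_cases i <;> fin_cases j <;>
      first
        | exact iff_of_false (H.loopless.irrefl _) (by decide)
        | exact iff_of_true a01 (by decide)
        | exact iff_of_true a01.symm (by decide)
        | exact iff_of_true a12 (by decide)
        | exact iff_of_true a12.symm (by decide)
        | exact iff_of_true a23 (by decide)
        | exact iff_of_true a23.symm (by decide)
        | exact iff_of_true a30 (by decide)
        | exact iff_of_true a30.symm (by decide)
        | exact iff_of_false n02 (by decide)
        | exact iff_of_false (fun h => n02 h.symm) (by decide)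
        | exact iff_of_false n13 (by decide)
        | exact iff_of_false (fun h => n13 h.symm) (by decide)

lemma fin_sub_val_one {n : ℕ} (i j : Fin n) :
    (j - i).val = 1 ↔ (j.val = i.val + 1 ∨ (j.val = 0 ∧ i.val = n - 1 ∧ 1 < n)) := by
  have hi := i.2; have hj := j.2
  have hmod : (j - i).val = (n - i.val + j.val) % n := by rw [Fin.sub_def]
  rcases le_or_gt i.val j.val with h | h
  · rw [hmod, show (n - i.val + j.val) = (j.val - i.val) + n by omega, Nat.add_mod_right,
      Nat.mod_eq_of_lt (by omega)]
    omega
  · rw [hmod, Nat.mod_eq_of_lt (by omega)]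
    omega

lemma cycle_config (hfree : ∀ n, 4 ≤ n → IsEmpty (cycleGraph n ↪g H))
    {n : ℕ} (hn : 4 ≤ n) (f : Fin n → V) (hinj : Function.Injective f)
    (hadj : ∀ i j : Fin n, H.Adj (f i) (f j) ↔
      (j.val = i.val + 1 ∨ (j.val = 0 ∧ i.val = n - 1)) ∨
      (i.val = j.val + 1 ∨ (i.val = 0 ∧ j.val = n - 1))) : False := by
  refine (hfree n hn).false ⟨⟨f, hinj⟩, ?_⟩
  intro i j
  show H.Adj (f i) (f j) ↔ _
  rw [hadj, cycleGraph_adj', fin_sub_val_one, fin_sub_val_one]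
  have := i.2
  constructor <;> intro h <;> rcases h with (h|h)|(h|h) <;> omega

lemma getVert_dist_le {G : SimpleGraph V} {a b : V} (hc : G.Connected) (p : G.Walk a b) :
    ∀ j, ∀ i ≤ j, j ≤ p.length → G.dist (p.getVert i) (p.getVert j) ≤ j - i := by
  intro j
  induction j with
  | zero => intro i hi _; interval_cases i; simp [SimpleGraph.dist_self]
  | succ m ih =>
    intro i hi hj
    rcases Nat.lt_or_ge i (m+1) with h | h
    · calc G.dist (p.getVert i) (p.getVert (m+1)) ≤
          G.dist (p.getVert i) (p.getVert m) + G.dist (p.getVert m) (p.getVert (m+1)) :=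
            hc.dist_triangle
        _ ≤ (m - i) + 1 := by
            gcongr
            · exact ih i (by omega) (by omega)
            · exact le_trans (SimpleGraph.dist_le (Walk.adj_getVert_succ p (by omega)).toWalk)
                (by simp)
        _ ≤ m + 1 - i := by omega
    · have : i = m + 1 := by omega
      subst this; simp [SimpleGraph.dist_self]

lemma getVert_dist_eq {G : SimpleGraph V} {a b : V} (hc : G.Connected) (p : G.Walk a b)
    (hp : p.length = G.dist a b) {i j : ℕ} (hij : i ≤ j) (hj : j ≤ p.length) :
    G.dist (p.getVert i) (p.getVert j) = j - i := by
  have h1 := getVert_dist_le hc p j i hij hj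
  have h2 := getVert_dist_le hc p i 0 (Nat.zero_le _) (le_trans hij hj)
  have h3 := getVert_dist_le hc p p.length j hj le_rfl
  rw [p.getVert_zero] at h2
  rw [p.getVert_length] at h3
  have h4 : G.dist a b ≤ G.dist a (p.getVert i) + G.dist (p.getVert i) b := hc.dist_triangle
  have h5 : G.dist (p.getVert i) b ≤
      G.dist (p.getVert i) (p.getVert j) + G.dist (p.getVert j) b := hc.dist_triangle
  omega

lemma exists_crossing {G : SimpleGraph V} {S : Set V} :
    ∀ {w s : V}, G.Walk w s → w ∉ S → s ∈ S → ∃ x y, G.Adj y x ∧ x ∉ S ∧ y ∈ S := by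
  intro w s q
  induction q with
  | nil => intro h hs; exact absurd hs h
  | @cons u v w h q ih =>
    intro hw hs
    by_cases h2 : v ∈ S
    · exact ⟨u, v, h.symm, hw, h2⟩
    · exact ih h2 hs

end Aux

theorem joinComp_threeLeafPower_of_not_clique {V1 V2 : Type*}
    (G1 : SimpleGraph V1) (G2 : SimpleGraph V2)
    (h1 : G1.Connected) (h2 : G2.Connected)
    (hL1 : Is3LeafPower G1)
    (S1 : Set V1) (S2 : Set V2) (hS1 : S1.Nonempty) (hS2 : S2.Nonempty)
    (hnc : ¬ G1.IsClique S1)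
    (hH : Is3LeafPower (joinComp G1 G2 S1 S2)) :
    G2.IsClique Set.univ ∧ S2 = Set.univ ∧ ∃ u : V1, S1 = {x | G1.Adj u x} ∪ {u} := by
  classical
  obtain ⟨hbull, hdart, hgem, hcyc⟩ := hH
  obtain ⟨hb1, hd1, hg1, hc1⟩ := hL1
  obtain ⟨s0, hs0⟩ := hS2
  rw [SimpleGraph.isClique_iff, Set.Pairwise] at hnc
  push_neg at hnc
  obtain ⟨a0, ha0, b0, hb0, hne0, hnadj0⟩ := hnc
  -- key step: a nonadjacent pair in S1 with a common neighbor in S1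
  have key : ∃ a b c : V1, a ∈ S1 ∧ b ∈ S1 ∧ c ∈ S1 ∧ ¬G1.Adj a b ∧ a ≠ b ∧
      G1.Adj a c ∧ G1.Adj c b := by
    have hPex : ∃ k, ∃ a b : V1, a ∈ S1 ∧ b ∈ S1 ∧ a ≠ b ∧ ¬G1.Adj a b ∧ G1.dist a b = k :=
      ⟨_, a0, b0, ha0, hb0, hne0, hnadj0, rfl⟩
    obtain ⟨k, hPk, hmin⟩ : ∃ k, (∃ a b : V1, a ∈ S1 ∧ b ∈ S1 ∧ a ≠ b ∧ ¬G1.Adj a b ∧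
        G1.dist a b = k) ∧ ∀ m, m < k → ¬(∃ a b : V1, a ∈ S1 ∧ b ∈ S1 ∧ a ≠ b ∧
        ¬G1.Adj a b ∧ G1.dist a b = m) :=
      ⟨Nat.find hPex, Nat.find_spec hPex, fun m hm => Nat.find_min hPex hm⟩
    obtain ⟨a, b, ha, hb, hne, hnadj, hdist⟩ := hPk
    have hk2 : 2 ≤ k := by
      by_contra hcon
      push_neg at hcon
      interval_cases k
      · exact hne (h1.dist_eq_zero_iff.mp hdist)
      · exact hnadj (SimpleGraph.dist_eq_one_iff_adj.mp hdist)
    obtain ⟨p, hp⟩ := h1.exists_walk_length_eq_dist a b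
    have hp' : p.length = k := by rw [hp, hdist]
    have hD : ∀ i j : ℕ, i ≤ j → j ≤ k → G1.dist (p.getVert i) (p.getVert j) = j - i := by
      intro i j hij hjk
      exact getVert_dist_eq h1 p hp hij (by omega)
    have hgb : p.getVert k = b := by rw [← hp', p.getVert_length]
    have hPadj : ∀ i j : ℕ, i ≤ j → j ≤ k →
        (G1.Adj (p.getVert i) (p.getVert j) ↔ j = i + 1) := by
      intro i j hij hjk
      constructor
      · intro hadj
        have hd1' := hD i j hij hjk
        have hd2' : G1.dist (p.getVert i) (p.getVert j) = 1 :=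
          SimpleGraph.dist_eq_one_iff_adj.mpr hadj
        omega
      · intro h; subst h; exact p.adj_getVert_succ (by omega)
    have hPne : ∀ i j : ℕ, i < j → j ≤ k → p.getVert i ≠ p.getVert j := by
      intro i j hij hjk heq
      have hd := hD i j (by omega) hjk
      rw [heq, SimpleGraph.dist_self] at hd
      omega
    rcases eq_or_lt_of_le hk2 with hk3 | hk3
    · -- k = 2 : the midpoint is a common neighbor, and it lies in S1
      have hac : G1.Adj a (p.getVert 1) := by
        have h := p.adj_getVert_succ (i := 0) (by omega)
        rwa [p.getVert_zero] at h
      have hg2 : p.getVert 2 = b := by rw [show (2:ℕ) = k from hk3, hgb]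
      have hcb : G1.Adj (p.getVert 1) b := by
        have h := p.adj_getVert_succ (i := 1) (by omega)
        norm_num at h
        rwa [hg2] at h
      have hcS : p.getVert 1 ∈ S1 := by
        by_contra hcS
        exact c4_config hcyc (jc_ll.mpr hac) (jc_ll.mpr hcb) (jc_lr.mpr ⟨hb, hs0⟩)
          (jc_rl.mpr ⟨ha, hs0⟩) (fun h => hnadj (jc_ll.mp h)) (fun h => hcS (jc_lr.mp h).1)
          (by simpa using hne) (by simp)
      exact ⟨a, b, p.getVert 1, ha, hb, hcS, hnadj, hne, hac, hcb⟩
    · -- k ≥ 3 : impossible, we find a long hole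
      exfalso
      have hint : ∀ i : ℕ, 1 ≤ i → i ≤ k - 1 → p.getVert i ∉ S1 := by
        intro i hi1 hik hiS
        rcases Nat.lt_or_ge i 2 with h2i | h2i
        · have hi : i = 1 := by omega
          subst hi
          have hd : G1.dist (p.getVert 1) b = k - 1 := by
            have h := hD 1 k (by omega) le_rfl
            rwa [hgb] at h
          refine hmin (k-1) (by omega) ⟨p.getVert 1, b, hiS, hb, ?_, ?_, hd⟩
          · intro heq; rw [heq, SimpleGraph.dist_self] at hd; omega
          · intro hadj
            have := SimpleGraph.dist_eq_one_iff_adj.mpr hadj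
            omega
        · have hd : G1.dist a (p.getVert i) = i := by
            have h := hD 0 i (by omega) (by omega)
            rwa [p.getVert_zero] at h
          refine hmin i (by omega) ⟨a, p.getVert i, ha, hiS, ?_, ?_, hd⟩
          · intro heq; rw [← heq, SimpleGraph.dist_self] at hd; omega
          · intro hadj
            have := SimpleGraph.dist_eq_one_iff_adj.mpr hadj
            omega
      set f : Fin (k+2) → V1 ⊕ V2 :=
        fun i => if _ : (i : ℕ) ≤ k then Sum.inl (p.getVert i) else Sum.inr s0 with hf
      have hfl : ∀ i : Fin (k+2), (i : ℕ) ≤ k → f i = Sum.inl (p.getVert i) :=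
        fun i h => by simp [hf, h]
      have hfr : ∀ i : Fin (k+2), ¬(i : ℕ) ≤ k → f i = Sum.inr s0 :=
        fun i h => by simp [hf, h]
      refine cycle_config hcyc (n := k + 2) (by omega) f ?_ ?_
      · intro i j hij
        by_cases hik : (i:ℕ) ≤ k <;> by_cases hjk : (j:ℕ) ≤ k
        · rw [hfl i hik, hfl j hjk] at hij
          have heq := Sum.inl.inj hij
          have hval : (i:ℕ) = j := by
            by_contra hcon
            rcases Nat.lt_or_ge i.val j.val with h | h
            · exact hPne i.val j.val h hjk heq
            · exact hPne j.val i.val (by omega) hik heq.symm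
          exact Fin.ext hval
        · rw [hfl i hik, hfr j hjk] at hij; exact absurd hij (by simp)
        · rw [hfr i hik, hfl j hjk] at hij; exact absurd hij (by simp)
        · have := i.2; have := j.2; exact Fin.ext (by omega)
      · intro i j
        have hi2 := i.2; have hj2 := j.2
        by_cases hik : (i:ℕ) ≤ k <;> by_cases hjk : (j:ℕ) ≤ k
        · rw [hfl i hik, hfl j hjk, jc_ll]
          constructor
          · intro hadj
            rcases Nat.le_total i.val j.val with hle | hle
            · have := (hPadj _ _ hle hjk).mp hadj
              omega
            · have := (hPadj _ _ hle hik).mp hadj.symm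
              omega
          · intro hcond
            have hcond' : (j:ℕ) = i + 1 ∨ (i:ℕ) = j + 1 := by omega
            rcases hcond' with h | h
            · exact (hPadj i j (by omega) hjk).mpr h
            · exact ((hPadj j i (by omega) hik).mpr h).symm
        · rw [hfl i hik, hfr j hjk, jc_lr]
          constructor
          · rintro ⟨hxS, -⟩
            have : (i:ℕ) = 0 ∨ (i:ℕ) = k := by
              by_contra hcon
              push_neg at hcon
              exact hint i.val (by omega) (by omega) hxS
            omega
          · intro hcond
            have h0k : (i:ℕ) = 0 ∨ (i:ℕ) = k := by omega
            rcases h0k with h | h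
            · rw [h, p.getVert_zero]; exact ⟨ha, hs0⟩
            · rw [h, hgb]; exact ⟨hb, hs0⟩
        · rw [hfr i hik, hfl j hjk, jc_rl]
          constructor
          · rintro ⟨hxS, -⟩
            have : (j:ℕ) = 0 ∨ (j:ℕ) = k := by
              by_contra hcon
              push_neg at hcon
              exact hint j.val (by omega) (by omega) hxS
            omega
          · intro hcond
            have h0k : (j:ℕ) = 0 ∨ (j:ℕ) = k := by omega
            rcases h0k with h | h
            · rw [h, p.getVert_zero]; exact ⟨ha, hs0⟩
            · rw [h, hgb]; exact ⟨hb, hs0⟩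
        · rw [hfr i hik, hfr j hjk]
          exact iff_of_false ((joinComp G1 G2 S1 S2).loopless.irrefl _) (by omega)
  obtain ⟨a, b, c, ha, hb, hc, hnadj, hne, hac, hcb⟩ := key
  -- S2 is a clique
  have hS2adj : ∀ u ∈ S2, ∀ v ∈ S2, u ≠ v → G2.Adj u v := by
    intro u hu v hv huv
    by_contra hadj
    exact c4_config hcyc (jc_lr.mpr ⟨ha, hu⟩) (jc_rl.mpr ⟨hb, hu⟩) (jc_lr.mpr ⟨hb, hv⟩)
      (jc_rl.mpr ⟨ha, hv⟩) (fun h => hnadj (jc_ll.mp h)) (fun h => hadj (jc_rr.mp h))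
      (by simpa using hne) (by simpa using huv)
  -- S2 is everything
  have hS2univ : S2 = Set.univ := by
    by_contra hSu
    have hex : ∃ w, w ∉ S2 := by
      by_contra hcon; push_neg at hcon
      exact hSu (Set.eq_univ_of_forall hcon)
    obtain ⟨w, hw⟩ := hex
    obtain ⟨q⟩ := h2.preconnected w s0
    obtain ⟨x, y, hyx, hxS, hyS⟩ := exists_crossing q hw hs0
    exact dart_config hdart (jc_lr.mpr ⟨ha, hyS⟩) (jc_ll.mpr hac) (jc_lr.mpr ⟨hb, hyS⟩)
      (jc_ll.mpr hcb.symm) (jc_rl.mpr ⟨hc, hyS⟩) (jc_rr.mpr hyx)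
      (fun h => hnadj (jc_ll.mp h)) (fun h => hxS (jc_lr.mp h).2)
      (fun h => hxS (jc_lr.mp h).2) (fun h => hxS (jc_lr.mp h).2)
      (by simpa using hne) (by simp) (by simp) (by simp)
  refine ⟨?_, hS2univ, c, ?_⟩
  · intro u _ v _ huv
    exact hS2adj u (by rw [hS2univ]; trivial) v (by rw [hS2univ]; trivial) huv
  · ext d
    simp only [Set.mem_union, Set.mem_setOf_eq, Set.mem_singleton_iff]
    constructor
    · intro hd
      by_cases hdc : d = c
      · right; exact hdc
      · left
        by_contra hcd
        have hda : d ≠ a := by rintro rfl; exact hcd hac.symm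
        have hdb : d ≠ b := by rintro rfl; exact hcd hcb
        by_cases h1a : G1.Adj d a <;> by_cases h1b : G1.Adj d b
        · -- chordless C4 a-d-b-c in G1
          exact c4_config hc1 h1a.symm h1b hcb.symm hac.symm hnadj
            (fun h => hcd h.symm) hne hdc
        · -- gem on (d, a, c, b, s0)
          exact gem_config hgem (jc_ll.mpr h1a) (jc_ll.mpr hac) (jc_ll.mpr hcb)
            (jc_lr.mpr ⟨hd, hs0⟩) (jc_lr.mpr ⟨ha, hs0⟩) (jc_lr.mpr ⟨hc, hs0⟩)
            (jc_lr.mpr ⟨hb, hs0⟩)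
            (fun h => hcd ((jc_ll.mp h).symm)) (fun h => h1b (jc_ll.mp h))
            (fun h => hnadj (jc_ll.mp h))
            (by simpa using hdc) (by simpa using hdb) (by simpa using hne)
        · -- gem on (d, b, c, a, s0)
          exact gem_config hgem (jc_ll.mpr h1b) (jc_ll.mpr hcb.symm) (jc_ll.mpr hac.symm)
            (jc_lr.mpr ⟨hd, hs0⟩) (jc_lr.mpr ⟨hb, hs0⟩) (jc_lr.mpr ⟨hc, hs0⟩)
            (jc_lr.mpr ⟨ha, hs0⟩)
            (fun h => hcd ((jc_ll.mp h).symm)) (fun h => h1a (jc_ll.mp h))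
            (fun h => hnadj ((jc_ll.mp h).symm))
            (by simpa using hdc) (by simpa using hda) (by simpa using (Ne.symm hne))
        · -- dart on (a, b, s0, c, d)
          exact dart_config hdart (jc_lr.mpr ⟨ha, hs0⟩) (jc_ll.mpr hac) (jc_lr.mpr ⟨hb, hs0⟩)
            (jc_ll.mpr hcb.symm) (jc_rl.mpr ⟨hc, hs0⟩) (jc_rl.mpr ⟨hd, hs0⟩)
            (fun h => hnadj (jc_ll.mp h)) (fun h => h1a ((jc_ll.mp h).symm))
            (fun h => h1b ((jc_ll.mp h).symm)) (fun h => hcd (jc_ll.mp h))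
            (by simpa using hne) (by simpa using (Ne.symm hda)) (by simpa using (Ne.symm hdb))
            (by simpa using (Ne.symm hdc))
    · rintro (hd | rfl)
      · -- d is a neighbor of c : show d ∈ S1
        by_contra hdS
        have hda : d ≠ a := fun e => hdS (e ▸ ha)
        have hdb : d ≠ b := fun e => hdS (e ▸ hb)
        by_cases h1a : G1.Adj d a <;> by_cases h1b : G1.Adj d b
        · -- chordless C4 a-d-b-s0 in H
          exact c4_config hcyc (jc_ll.mpr h1a.symm) (jc_ll.mpr h1b) (jc_lr.mpr ⟨hb, hs0⟩)
            (jc_rl.mpr ⟨ha, hs0⟩) (fun h => hnadj (jc_ll.mp h)) (fun h => hdS (jc_lr.mp h).1)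
            (by simpa using hne) (by simp)
        · -- gem on (d, a, s0, b, c)
          exact gem_config hgem (jc_ll.mpr h1a) (jc_lr.mpr ⟨ha, hs0⟩) (jc_rl.mpr ⟨hb, hs0⟩)
            (jc_ll.mpr hd.symm) (jc_ll.mpr hac) (jc_rl.mpr ⟨hc, hs0⟩) (jc_ll.mpr hcb.symm)
            (fun h => hdS (jc_lr.mp h).1) (fun h => h1b (jc_ll.mp h))
            (fun h => hnadj (jc_ll.mp h))
            (by simp) (by simpa using hdb) (by simpa using hne)
        · -- gem on (d, b, s0, a, c)
          exact gem_config hgem (jc_ll.mpr h1b) (jc_lr.mpr ⟨hb, hs0⟩) (jc_rl.mpr ⟨ha, hs0⟩)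
            (jc_ll.mpr hd.symm) (jc_ll.mpr hcb.symm) (jc_rl.mpr ⟨hc, hs0⟩) (jc_ll.mpr hac)
            (fun h => hdS (jc_lr.mp h).1) (fun h => h1a (jc_ll.mp h))
            (fun h => hnadj ((jc_ll.mp h).symm))
            (by simp) (by simpa using hda) (by simpa using (Ne.symm hne))
        · -- dart on (a, b, c, s0, d)
          exact dart_config hdart (jc_ll.mpr hac) (jc_lr.mpr ⟨ha, hs0⟩) (jc_ll.mpr hcb.symm)
            (jc_lr.mpr ⟨hb, hs0⟩) (jc_lr.mpr ⟨hc, hs0⟩) (jc_ll.mpr hd)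
            (fun h => hnadj (jc_ll.mp h)) (fun h => h1a ((jc_ll.mp h).symm))
            (fun h => h1b ((jc_ll.mp h).symm)) (fun h => hdS (jc_rl.mp h).1)
            (by simpa using hne) (by simpa using (Ne.symm hda)) (by simpa using (Ne.symm hdb))
            (by simp)
      · exact hc
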